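/- Let m and n be nonnegative integers with n odd. Then X^(m)(n) >= 0. -/

import Mathlib

/-- The geometric series `1/(1-q^k) = ∑_{j ≥ 0} q^{k·j}` as a formal power series over `ℤ`:
its coefficient at `q^n` is `1` exactly when `k ∣ n`. -/
def geomSer (k : ℕ) : PowerSeries ℤ := PowerSeries.mk fun n => if k ∣ n then 1 else 0

/-- The formal power series `∑_{k ≥ 1} (-1)^k q^{k(3k+1)+2mk}/(1-q^{2k})`.
For a fixed `n`, only the (finitely many) summands with `1 ≤ k ≤ n` can contribute to the
coefficient of `q^n` (for `k > n` the lowest exponent `k(3k+1)+2mk` exceeds `n`), so the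
coefficient of `q^n` of the infinite sum is the corresponding finite sum of coefficients. -/
noncomputable def seriesA (m : ℕ) : PowerSeries ℤ :=
  PowerSeries.mk fun n => ∑ k ∈ Finset.Icc 1 n,
    (PowerSeries.coeff (R := ℤ) n)
      (PowerSeries.C (R := ℤ) ((-1) ^ k) * PowerSeries.X ^ (k * (3 * k + 1) + 2 * m * k) *
        geomSer (2 * k))

/-- The formal power series `∑_{k ≥ 1} (-1)^k q^{k(k+1)/2+mk}/(1-q^k)` (same convention). -/
noncomputable def seriesB (m : ℕ) : PowerSeries ℤ :=
  PowerSeries.mk fun n => ∑ k ∈ Finset.Icc 1 n,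
    (PowerSeries.coeff (R := ℤ) n)
      (PowerSeries.C (R := ℤ) ((-1) ^ k) * PowerSeries.X ^ (k * (k + 1) / 2 + m * k) * geomSer k)

/-- Coefficient of a single summand. -/
lemma coeff_term (c : ℤ) (a k n : ℕ) :
    (PowerSeries.coeff (R := ℤ) n) (PowerSeries.C (R := ℤ) c * PowerSeries.X ^ a * geomSer k) =
      if a ≤ n ∧ k ∣ (n - a) then c else 0 := by
  rw [mul_assoc, PowerSeries.coeff_C_mul, PowerSeries.coeff_X_pow_mul', geomSer]
  by_cases h : a ≤ n
  · rw [if_pos h, PowerSeries.coeff_mk]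
    by_cases hd : k ∣ n - a
    · rw [if_pos hd, if_pos ⟨h, hd⟩, mul_one]
    · rw [if_neg hd, if_neg (fun hh => hd hh.2), mul_zero]
  · rw [if_neg h, if_neg (fun hh => h hh.1), mul_zero]

/-- At odd `n` the coefficient of `seriesA` vanishes. -/
lemma seriesA_odd (m n : ℕ) (hn : Odd n) :
    (PowerSeries.coeff (R := ℤ) n) (seriesA m) = 0 := by
  rw [seriesA, PowerSeries.coeff_mk]
  refine Finset.sum_eq_zero fun k _ => ?_
  rw [coeff_term]
  rw [if_neg]
  rintro ⟨hle, t, ht⟩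
  obtain ⟨w, hw⟩ := hn
  have h1 : ∃ u, k * (3 * k + 1) = 2 * u := by
    rcases Nat.even_or_odd k with ⟨c, hc⟩ | ⟨c, hc⟩ <;> subst hc
    · exact ⟨c * (3 * (c + c) + 1), by ring⟩
    · exact ⟨(2 * c + 1) * (3 * c + 2), by ring⟩
  obtain ⟨u, hu⟩ := h1
  have h2 : k * (3 * k + 1) + 2 * m * k = 2 * (u + m * k) := by rw [hu]; ring
  have h3 : n - (k * (3 * k + 1) + 2 * m * k) = 2 * (k * t) := by rw [ht]; ring
  omega

/-- At odd `n` the coefficient of `seriesB` is nonpositive. -/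
lemma seriesB_odd (m n : ℕ) (hn : Odd n) :
    (PowerSeries.coeff (R := ℤ) n) (seriesB m) ≤ 0 := by
  rw [seriesB, PowerSeries.coeff_mk]
  have hterm : ∀ k, (PowerSeries.coeff (R := ℤ) n)
      (PowerSeries.C (R := ℤ) ((-1) ^ k) * PowerSeries.X ^ (k * (k + 1) / 2 + m * k) * geomSer k) =
      if k * (k + 1) / 2 + m * k ≤ n ∧ k ∣ (n - (k * (k + 1) / 2 + m * k)) then (-1 : ℤ) ^ k
      else 0 := fun k => coeff_term _ _ _ _
  set P : ℕ → Prop := fun k => k * (k + 1) / 2 + m * k ≤ n ∧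
      k ∣ (n - (k * (k + 1) / 2 + m * k)) with hP
  classical
  calc ∑ k ∈ Finset.Icc 1 n, (PowerSeries.coeff (R := ℤ) n)
        (PowerSeries.C (R := ℤ) ((-1) ^ k) * PowerSeries.X ^ (k * (k + 1) / 2 + m * k) * geomSer k)
      = ∑ k ∈ Finset.Icc 1 n, (if P k then ((-1 : ℤ)) ^ k else 0) := by
        exact Finset.sum_congr rfl fun k _ => hterm k
    _ = ∑ k ∈ (Finset.Icc 1 n).filter (fun k => P k ∧ Even k), (1 : ℤ)
        + ∑ k ∈ (Finset.Icc 1 n).filter (fun k => P k ∧ ¬ Even k), (-1 : ℤ) := by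
        rw [Finset.sum_filter, Finset.sum_filter, ← Finset.sum_add_distrib]
        refine Finset.sum_congr rfl fun k _ => ?_
        by_cases hp : P k
        · by_cases he : Even k
          · simp [hp, he, Even.neg_one_pow he]
          · simp [hp, he, Odd.neg_one_pow (Nat.not_even_iff_odd.mp he)]
        · simp [hp]
    _ ≤ 0 := by
        rw [Finset.sum_const, Finset.sum_const]
        simp only [nsmul_eq_mul, mul_one, mul_neg]
        have hcard : ((Finset.Icc 1 n).filter (fun k => P k ∧ Even k)).card ≤
            ((Finset.Icc 1 n).filter (fun k => P k ∧ ¬ Even k)).card := by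
          apply Finset.card_le_card_of_injOn (fun k => k / 2)
          · intro k hk
            simp only [Finset.mem_coe, Finset.mem_filter, Finset.mem_Icc] at hk ⊢
            obtain ⟨⟨hk1, hkn⟩, ⟨hle, hdvd⟩, he⟩ := hk
            obtain ⟨l, hl⟩ := he
            have hkl : k = 2 * l := by omega
            subst hkl
            have hdiv2 : 2 * l / 2 = l := by omega
            rw [hdiv2]
            have hl1 : 1 ≤ l := by omega
            -- a_{2l} = l*(2l+1) + 2ml
            have ha2l : 2 * l * (2 * l + 1) / 2 + m * (2 * l) = l * (2 * l + 1) + 2 * m * l := by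
              have h0 : 2 * l * (2 * l + 1) = 2 * (l * (2 * l + 1)) := by ring
              rw [h0, Nat.mul_div_cancel_left _ (by norm_num)]; ring
            rw [ha2l] at hle hdvd
            obtain ⟨t, ht⟩ := hdvd
            have hneq : n = l * (2 * l + 1 + 2 * m + 2 * t) := by
              have h0 := Nat.sub_add_cancel hle
              nlinarith [h0]
            have hldvd : l ∣ n := ⟨_, hneq⟩
            have hlodd : ¬ Even l := by
              rintro ⟨u, hu⟩
              obtain ⟨w, hw⟩ := hn
              have h0 : n = 2 * (u * (2 * l + 1 + 2 * m + 2 * t)) := by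
                rw [hneq, hu]; ring
              omega
            obtain ⟨lu, hlu⟩ := Nat.not_even_iff_odd.mp hlodd
            -- a_l = l*(l+1)/2 + m*l, with l odd so l*(l+1)/2 = l*((l+1)/2)
            have hal : l * (l + 1) / 2 = l * ((l + 1) / 2) := by
              rw [Nat.mul_div_assoc l ⟨lu + 1, by omega⟩]
            have halle : l * (l + 1) / 2 + m * l ≤ n := by
              have h1 : l * (l + 1) / 2 ≤ l * (2 * l + 1) := by
                calc l * (l + 1) / 2 ≤ l * (l + 1) := Nat.div_le_self _ _
                  _ ≤ l * (2 * l + 1) := Nat.mul_le_mul_left _ (by omega)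
              have h2 : m * l ≤ 2 * m * l := by nlinarith
              omega
            refine ⟨⟨hl1, Nat.le_of_dvd (by omega) hldvd⟩, ⟨halle, ?_⟩, hlodd⟩
            apply Nat.dvd_sub hldvd
            rw [hal]
            exact Dvd.dvd.add (Dvd.intro _ rfl) (Dvd.intro_left _ rfl)
          · intro k1 h1 k2 h2 heq
            simp only [Finset.mem_coe, Finset.mem_filter] at h1 h2
            obtain ⟨u1, hu1⟩ := h1.2.2
            obtain ⟨u2, hu2⟩ := h2.2.2
            have heq' : k1 / 2 = k2 / 2 := heq
            omega
        have := (Nat.cast_le (α := ℤ)).mpr hcard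
        linarith
    
/-- Let `m, n` be nonnegative integers with `n` odd, and let `X^(m)` be
defined by `∑_{n ≥ 0} X^(m)(n) q^n = (1/(1-q^2)) (∑_{k≥1} (-1)^k q^{k(3k+1)+2mk}/(1-q^{2k})
- ∑_{k≥1} (-1)^k q^{k(k+1)/2+mk}/(1-q^k))` (the defining identity is stated with `1-q^2`
multiplied over to the left-hand side). Then `X^(m)(n) ≥ 0`. -/
theorem stmt0 (m : ℕ) (Xc : ℕ → ℤ)
    (hX : (1 - PowerSeries.X ^ 2) * PowerSeries.mk Xc = seriesA m - seriesB m)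
    (n : ℕ) (hn : Odd n) : 0 ≤ Xc n := by
  induction n using Nat.strong_induction_on with
  | _ n ih =>
    have h := congrArg (PowerSeries.coeff (R := ℤ) n) hX
    rw [map_sub, seriesA_odd m n hn, zero_sub, sub_mul, one_mul, map_sub,
      PowerSeries.coeff_mk, PowerSeries.coeff_X_pow_mul', PowerSeries.coeff_mk] at h
    have hB := seriesB_odd m n hn
    by_cases h2 : 2 ≤ n
    · rw [if_pos h2] at h
      have hodd : Odd (n - 2) := by
        obtain ⟨w, hw⟩ := hn; exact ⟨w - 1, by omega⟩
      have := ih (n - 2) (by omega) hodd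
      linarith
    · rw [if_neg h2] at h
      linarith
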